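/- Let U = ∑_{j=1}^{d_A} |α_j⟩⟨β_j| ⊗ W_j be a unitary on ℂ^{d_A} ⊗ ℂ^{d_B}, where |α_1⟩, ..., |α_{d_A}⟩ are linearly independent vectors in ℂ^{d_A}, |β_1⟩, ..., |β_{d_A}⟩ are linearly independent unit vectors in ℂ^{d_A}, and W_j are d_B × d_B matrices. Then each W_j is a nonzero scalar multiple of a unitary matrix. -/

import Mathlib

open Matrix Kronecker Finset

private lemma vv_mul_vv {m n p : Type*} [Fintype n] (u : m → ℂ) (v w : n → ℂ) (x : p → ℂ) :
    vecMulVec u v * vecMulVec w x = (v ⬝ᵥ w) • vecMulVec u x := by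
  ext i k
  simp only [Matrix.mul_apply, vecMulVec_apply, Matrix.smul_apply, smul_eq_mul, dotProduct,
    Finset.sum_mul]
  exact Finset.sum_congr rfl fun _ _ => by ring

private lemma vv_conjT {m n : Type*} (u : m → ℂ) (v : n → ℂ) :
    (vecMulVec u v)ᴴ = vecMulVec (star v) (star u) := by
  ext i k
  simp [vecMulVec_apply, conjTranspose_apply, mul_comm]

private lemma mul_vv {m n p : Type*} [Fintype n] (M : Matrix m n ℂ) (u : n → ℂ) (v : p → ℂ) :
    M * vecMulVec u v = vecMulVec (M *ᵥ u) v := by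
  ext i k
  simp only [Matrix.mul_apply, vecMulVec_apply, Matrix.mulVec, dotProduct, Finset.sum_mul]
  exact Finset.sum_congr rfl fun _ _ => by ring

private lemma kron_conjT {m n p q : Type*} (A : Matrix m n ℂ) (B : Matrix p q ℂ) :
    (A ⊗ₖ B)ᴴ = Aᴴ ⊗ₖ Bᴴ := by
  ext i k
  simp [conjTranspose_apply, kroneckerMap_apply, mul_comm]

theorem stmt_8 (dA dB : ℕ)
    (α β : Fin dA → (Fin dA → ℂ))
    (hα : LinearIndependent ℂ α) (hβ : LinearIndependent ℂ β)
    (hβunit : ∀ j, dotProduct (star (β j)) (β j) = 1)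
    (W : Fin dA → Matrix (Fin dB) (Fin dB) ℂ)
    (U : Matrix (Fin dA × Fin dB) (Fin dA × Fin dB) ℂ)
    (hU : U ∈ Matrix.unitaryGroup (Fin dA × Fin dB) ℂ)
    (hexp : U = ∑ j, (Matrix.vecMulVec (α j) (star (β j))) ⊗ₖ W j) :
    ∀ j, ∃ c : ℂ, c ≠ 0 ∧ ∃ W' : Matrix (Fin dB) (Fin dB) ℂ,
      W' ∈ Matrix.unitaryGroup (Fin dB) ℂ ∧ W j = c • W' := by
  intro j
  -- the matrix with rows α, and its transpose B with columns α
  set A : Matrix (Fin dA) (Fin dA) ℂ := Matrix.of α with hA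
  have hAunit : IsUnit A := Matrix.linearIndependent_rows_iff_isUnit.mp hα
  set B : Matrix (Fin dA) (Fin dA) ℂ := Aᵀ with hBdef
  have hBunit : IsUnit B := (Matrix.isUnit_transpose A).mpr hAunit
  set C : Matrix (Fin dA) (Fin dA) ℂ := B⁻¹ with hCdef
  have hCB : C * B = 1 := Matrix.nonsing_inv_mul B (Matrix.isUnit_iff_isUnit_det B |>.mp hBunit)
  have hBsingle : ∀ k : Fin dA, B *ᵥ Pi.single k 1 = α k := by
    intro k
    ext a
    simp [hBdef, Matrix.mulVec, dotProduct, Pi.single_apply, hA]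
  have hCα : ∀ k : Fin dA, C *ᵥ α k = Pi.single k 1 := by
    intro k
    rw [← hBsingle k, Matrix.mulVec_mulVec, hCB, Matrix.one_mulVec]
  have hUU : U * Uᴴ = 1 := by
    have := (Matrix.mem_unitaryGroup_iff).mp hU
    rwa [Matrix.star_eq_conjTranspose] at this
  set T : Matrix (Fin dA × Fin dB) (Fin dA × Fin dB) ℂ :=
    C ⊗ₖ (1 : Matrix (Fin dB) (Fin dB) ℂ) with hT
  have hTU : T * U = ∑ k, (vecMulVec (Pi.single k 1) (star (β k))) ⊗ₖ W k := by
    rw [hexp, Finset.mul_sum]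
    refine Finset.sum_congr rfl fun k _ => ?_
    rw [hT, ← Matrix.mul_kronecker_mul, Matrix.one_mul, mul_vv, hCα]
  have hmain : T * Tᴴ = ∑ k, ∑ l, ((star (β k) ⬝ᵥ β l) •
      (vecMulVec (Pi.single k 1) (star (Pi.single l 1))) ⊗ₖ (W k * (W l)ᴴ)) := by
    have h1 : T * Tᴴ = (T * U) * (T * U)ᴴ := by
      rw [Matrix.conjTranspose_mul, ← Matrix.mul_assoc, Matrix.mul_assoc T U, hUU,
        Matrix.mul_one]
    rw [h1, hTU, Matrix.conjTranspose_sum, Finset.sum_mul_sum]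
    refine Finset.sum_congr rfl fun k _ => Finset.sum_congr rfl fun l _ => ?_
    rw [kron_conjT, vv_conjT, ← Matrix.mul_kronecker_mul, vv_mul_vv, star_star,
      Matrix.smul_kronecker]
  -- evaluate entries
  have hentry : ∀ b b' : Fin dB, (W j * (W j)ᴴ) b b'
      = (C * Cᴴ) j j * (if b = b' then 1 else 0) := by
    intro b b'
    have h2 := congrFun (congrFun hmain (j, b)) (j, b')
    have hL : (T * Tᴴ) (j, b) (j, b') = (C * Cᴴ) j j * (if b = b' then 1 else 0) := by
      rw [hT, kron_conjT, ← Matrix.mul_kronecker_mul]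
      simp [Matrix.one_apply]
    have hR : (∑ k, ∑ l, ((star (β k) ⬝ᵥ β l) •
        (vecMulVec (Pi.single k 1) (star (Pi.single l 1))) ⊗ₖ (W k * (W l)ᴴ))) (j, b) (j, b')
        = (W j * (W j)ᴴ) b b' := by
      simp [Matrix.sum_apply, vecMulVec_apply, Pi.single_apply, hβunit]
    rw [h2, hR] at hL
    exact hL
  -- g = (C * Cᴴ) j j is a positive real
  set g : ℂ := (C * Cᴴ) j j with hg
  have hgsum : g = ∑ k, Complex.normSq (C j k) := by
    simp [hg, Matrix.mul_apply, Matrix.conjTranspose_apply, Complex.mul_conj]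
  have hgne : g ≠ 0 := by
    intro h0
    have hz : ∑ k, Complex.normSq (C j k) = (0 : ℝ) := by
      have := hgsum.symm.trans h0
      exact_mod_cast this
    have hrow : ∀ k, C j k = 0 := fun k =>
      Complex.normSq_eq_zero.mp ((Finset.sum_eq_zero_iff_of_nonneg
        (fun i _ => Complex.normSq_nonneg (C j i))).mp hz k (Finset.mem_univ k))
    have h1 : (C * B) j j = 0 := by
      rw [Matrix.mul_apply]
      exact Finset.sum_eq_zero fun k _ => by rw [hrow k, zero_mul]
    rw [hCB] at h1
    simp [Matrix.one_apply] at h1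
  have hgr : ∃ r : ℝ, 0 < r ∧ g = (r : ℂ) := by
    refine ⟨∑ k, Complex.normSq (C j k), ?_, hgsum⟩
    rcases (Finset.sum_nonneg (fun i (_ : i ∈ Finset.univ) =>
      Complex.normSq_nonneg (C j i))).lt_or_eq with h | h
    · exact h
    · exfalso; apply hgne; rw [hgsum, ← h]; simp
  obtain ⟨r, hrpos, hgr⟩ := hgr
  set c : ℂ := ((Real.sqrt r : ℝ) : ℂ) with hc
  have hcne : c ≠ 0 := by
    simp only [hc, ne_eq, Complex.ofReal_eq_zero]
    exact (Real.sqrt_pos.mpr hrpos).ne'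
  have hc2 : c * c = g := by
    rw [hc, hgr, ← Complex.ofReal_mul, Real.mul_self_sqrt hrpos.le]
  have hWW : W j * (W j)ᴴ = g • (1 : Matrix (Fin dB) (Fin dB) ℂ) := by
    ext b b'
    rw [hentry b b']
    simp [Matrix.one_apply]
  refine ⟨c, hcne, c⁻¹ • W j, ?_, ?_⟩
  · rw [Matrix.mem_unitaryGroup_iff, Matrix.star_eq_conjTranspose, Matrix.conjTranspose_smul,
      Matrix.smul_mul, Matrix.mul_smul, hWW]
    have hstarc : star c⁻¹ = c⁻¹ := by
      rw [hc]; simp [← Complex.ofReal_inv]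
    rw [hstarc, smul_smul, smul_smul, ← hc2]
    rw [show c⁻¹ * c⁻¹ * (c * c) = (c⁻¹ * c) * (c⁻¹ * c) by ring,
      inv_mul_cancel₀ hcne, one_mul, one_smul]
  · rw [smul_smul, mul_inv_cancel₀ hcne, one_smul]
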